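/- Let I be a set of nonnegative real numbers satisfying the descending chain condition, let (d_j) be a strictly increasing sequence of elements of I, and fix a positive integer N, a positive integer m, and a real number d'. Then there is no sequence (f_j) of elements of I^+ such that d' = (N − 1 + m·d_j + f_j)/N for all j. -/

import Mathlib

/-- A set of reals satisfies the descending chain condition if it contains
no infinite strictly decreasing sequence. -/
def DCC (S : Set ℝ) : Prop := ¬ ∃ f : ℕ → ℝ, (∀ n, f n ∈ S) ∧ StrictAnti f

/-- A set of reals satisfies the ascending chain condition if it contains
no infinite strictly increasing sequence. -/
def ACC (S : Set ℝ) : Prop := ¬ ∃ f : ℕ → ℝ, (∀ n, f n ∈ S) ∧ StrictMono f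

/-- `I⁺ = {0} ∪ {x ∈ [0,1] | x is a finite (nonempty) sum of elements of I}`. -/
def plusSet (I : Set ℝ) : Set ℝ :=
  {0} ∪ {x | 0 ≤ x ∧ x ≤ 1 ∧ ∃ l : List ℝ, l ≠ [] ∧ (∀ j ∈ l, j ∈ I) ∧ l.sum = x}

/-- `D(I) = {a ≤ 1 | a = (m - 1 + f)/m, m ∈ ℤ_{>0}, f ∈ I⁺}`. -/
def DSet (I : Set ℝ) : Set ℝ :=
  {a | a ≤ 1 ∧ ∃ m : ℕ, 0 < m ∧ ∃ f ∈ plusSet I, a = ((m : ℝ) - 1 + f) / m}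

/-- `D_d(I) = {a ≤ 1 | a = (m - 1 + f + k·d)/m, k, m ∈ ℤ_{>0}, f ∈ I⁺}`. -/
def DdSet (d : ℝ) (I : Set ℝ) : Set ℝ :=
  {a | a ≤ 1 ∧ ∃ k m : ℕ, 0 < k ∧ 0 < m ∧ ∃ f ∈ plusSet I,
    a = ((m : ℝ) - 1 + f + (k : ℝ) * d) / m}

open Pointwise in
/-- `n`-fold sumset of `J`. -/
def sumNSet (J : Set ℝ) : ℕ → Set ℝ
  | 0 => {0}
  | (n + 1) => J + sumNSet J n

open Pointwise in
lemma sumNSet_isPWO {J : Set ℝ} (hJ : J.IsPWO) : ∀ n, (sumNSet J n).IsPWO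
  | 0 => Set.isPWO_singleton 0
  | (n + 1) => hJ.add (sumNSet_isPWO hJ n)

lemma zero_mem_sumNSet {J : Set ℝ} (h0 : (0 : ℝ) ∈ J) : ∀ n, (0 : ℝ) ∈ sumNSet J n
  | 0 => rfl
  | (n + 1) => by
      have := Set.add_mem_add h0 (zero_mem_sumNSet h0 n)
      simpa [sumNSet] using this

lemma list_sum_mem_sumNSet {J : Set ℝ} (h0 : (0 : ℝ) ∈ J) :
    ∀ (n : ℕ) (l : List ℝ), (∀ x ∈ l, x ∈ J) → l.length ≤ n → l.sum ∈ sumNSet J n := by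
  intro n
  induction n with
  | zero =>
    intro l _ hlen
    rw [List.length_eq_zero_iff.mp (Nat.le_zero.mp hlen)]
    simp [sumNSet]
  | succ n ih =>
    intro l hl hlen
    cases l with
    | nil => simpa using zero_mem_sumNSet h0 (n + 1)
    | cons a t =>
      have ha : a ∈ J := hl a (List.mem_cons_self)
      have ht : t.sum ∈ sumNSet J n :=
        ih t (fun x hx => hl x (List.mem_cons_of_mem a hx))
          (Nat.succ_le_succ_iff.mp hlen)
      simpa [sumNSet, List.sum_cons] using Set.add_mem_add ha ht

lemma filter_ne_zero_sum (l : List ℝ) : (l.filter (fun x => x ≠ 0)).sum = l.sum := by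
  classical
  induction l with
  | nil => simp
  | cons a t ih =>
    simp only [ne_eq, decide_not] at ih ⊢
    by_cases h : a = 0 <;> simp [List.filter_cons, h, ih]

theorem no_constant_value (I : Set ℝ) (hI : ∀ x ∈ I, 0 ≤ x) (hDCC : DCC I)
    (d : ℕ → ℝ) (hd : ∀ j, d j ∈ I) (hmono : StrictMono d)
    (N m : ℕ) (hN : 0 < N) (hm : 0 < m) (d' : ℝ) :
    ¬ ∃ f : ℕ → ℝ, (∀ j, f j ∈ plusSet I) ∧
      ∀ j, d' = ((N : ℝ) - 1 + (m : ℝ) * d j + f j) / N := by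
  classical
  rintro ⟨f, hfmem, hfd⟩
  have hN' : (N : ℝ) ≠ 0 := Nat.cast_ne_zero.mpr hN.ne'
  have hm' : (0 : ℝ) < (m : ℝ) := Nat.cast_pos.mpr hm
  -- f is determined: f j = N * d' - (N - 1) - m * d j
  have hf_eq : ∀ j, f j = (N : ℝ) * d' - ((N : ℝ) - 1) - (m : ℝ) * d j := by
    intro j
    have := hfd j
    field_simp at this
    linarith
  -- f is strictly antitone
  have hanti : StrictAnti f := by
    intro j k hjk
    have := hmono hjk
    rw [hf_eq j, hf_eq k]
    nlinarith
  -- elements of plusSet I are nonnegative and ≤ 1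
  have hnonneg : ∀ j, 0 ≤ f j := by
    intro j
    rcases hfmem j with h | h
    · simp [Set.mem_singleton_iff.mp h]
    · exact h.1
  have hpos : ∀ j, 0 < f j := fun j =>
    lt_of_le_of_lt (hnonneg (j + 1)) (hanti (Nat.lt_succ_self j))
  -- each f j is a sum of a nonempty list of positive elements of I
  have hlist : ∀ j, ∃ l : List ℝ, l ≠ [] ∧ (∀ x ∈ l, x ∈ I ∧ 0 < x) ∧ l.sum = f j ∧
      f j ≤ 1 := by
    intro j
    rcases hfmem j with h | h
    · exact absurd (Set.mem_singleton_iff.mp h) (hpos j).ne'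
    · obtain ⟨-, hle, l, -, hlI, hsum⟩ := h
      refine ⟨l.filter (fun x => x ≠ 0), ?_, ?_, by rw [filter_ne_zero_sum, hsum], hle⟩
      · intro hnil
        have : (l.filter (fun x => x ≠ 0)).sum = 0 := by rw [hnil]; simp
        rw [filter_ne_zero_sum, hsum] at this
        exact (hpos j).ne' this
      · intro x hx
        have hxl := List.mem_filter.mp hx
        have hxI : x ∈ I := hlI x hxl.1
        have hx0 : x ≠ 0 := by simpa using hxl.2
        exact ⟨hxI, lt_of_le_of_ne (hI x hxI) (Ne.symm hx0)⟩
  -- I is well-founded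
  have hWF : I.IsWF := by
    rw [Set.isWF_iff_no_descending_seq]
    intro g hg hmem
    exact hDCC ⟨g, fun n => hmem n, hg⟩
  -- the positive part of I has a minimum ε > 0
  set P : Set ℝ := {x | x ∈ I ∧ 0 < x} with hP
  have hPWF : P.IsWF := hWF.mono (fun x hx => hx.1)
  have hPne : P.Nonempty := by
    obtain ⟨l, hnil, hlP, -, -⟩ := hlist 0
    obtain ⟨x, hx⟩ := List.exists_mem_of_ne_nil l hnil
    exact ⟨x, hlP x hx⟩
  set ε : ℝ := hPWF.min hPne with hε
  have hεP : ε ∈ P := hPWF.min_mem hPne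
  have hεpos : 0 < ε := hεP.2
  set n : ℕ := ⌊1 / ε⌋₊ with hn
  -- every f j lies in the n-fold sumset of insert 0 I
  set J : Set ℝ := insert 0 I with hJ
  have h0J : (0 : ℝ) ∈ J := Set.mem_insert 0 I
  have hmemS : ∀ j, f j ∈ sumNSet J n := by
    intro j
    obtain ⟨l, hnil, hlP, hsum, hle⟩ := hlist j
    have hlen : l.length ≤ n := by
      have hcard : (l.length : ℝ) * ε ≤ l.sum := by
        have := List.card_nsmul_le_sum l ε (fun x hx => hPWF.min_le hPne (hlP x hx))
        simpa [nsmul_eq_mul] using this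
      have h1 : (l.length : ℝ) ≤ 1 / ε := by
        rw [le_div_iff₀ hεpos]
        calc (l.length : ℝ) * ε ≤ l.sum := hcard
          _ = f j := hsum
          _ ≤ 1 := hle
      exact Nat.le_floor h1
    rw [← hsum]
    exact list_sum_mem_sumNSet h0J n l
      (fun x hx => Set.mem_insert_of_mem 0 (hlP x hx).1) hlen
  -- the sumset is PWO, extract a monotone subsequence, contradiction
  have hJPWO : J.IsPWO := hWF.isPWO.insert 0
  obtain ⟨g, hg⟩ := (sumNSet_isPWO hJPWO n).exists_monotone_subseq hmemS
  have h01 : f (g 0) ≤ f (g 1) := hg (Nat.zero_le 1)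
  have h10 : f (g 1) < f (g 0) := hanti (g.strictMono Nat.zero_lt_one)
  exact absurd h01 (not_le.mpr h10)
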